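/- Fix N ≥ 1 and n ≥ 1. Let w₁, …, wₙ be filters on ZMod N and p₁, …, pₙ natural numbers. Given a signal s : ZMod N → ℂ, define recursively s₀ = s, IMF_j = 𝒱_{w_j}^{p_j} s_{j−1}, and s_j = s_{j−1} − IMF_j for j = 1, …, n. Then for every character index k ∈ ZMod N: (ℱ(IMF_n))(k) = (1 − (ℱwₙ)(k))^{pₙ} · ∏_{j=1}^{n−1} (1 − (1 − (ℱw_j)(k))^{p_j}) · (ℱs)(k). -/

import Mathlib

open Finset

/-- The discrete Fourier transform on `ZMod N`:
`(ℱs)(k) = Σ_j s(j) exp(−2πi jk/N)`. -/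
noncomputable def discreteFourier (N : ℕ) [NeZero N] (s : ZMod N → ℂ) (k : ZMod N) : ℂ :=
  ∑ j : ZMod N,
    s j * Complex.exp (-(2 * (Real.pi : ℂ) * Complex.I * ((j.val : ℂ) * (k.val : ℂ)) / (N : ℂ)))

/-- The fluctuation operator `𝒱_w s = s − w ⋆ s` on `ZMod N`, for a real-valued
`w` acting on a complex signal `s`. -/
noncomputable def fluctuation {N : ℕ} [NeZero N] (w : ZMod N → ℝ) (s : ZMod N → ℂ) :
    ZMod N → ℂ :=
  fun g => s g - ∑ h : ZMod N, (w (g - h) : ℂ) * s h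

/-- The remainders of the iterative filtering scheme: `s₀ = s` and
`s_j = s_{j−1} − 𝒱_{w_j}^{p_j} s_{j−1}`. -/
noncomputable def remainder {N : ℕ} [NeZero N] (w : ℕ → ZMod N → ℝ) (p : ℕ → ℕ)
    (s : ZMod N → ℂ) : ℕ → (ZMod N → ℂ)
  | 0 => s
  | j + 1 => remainder w p s j - (fluctuation (w (j + 1)))^[p (j + 1)] (remainder w p s j)

/-- The `j`-th intrinsic mode function `IMF_j = 𝒱_{w_j}^{p_j} s_{j−1}` (for `j ≥ 1`). -/
noncomputable def imf {N : ℕ} [NeZero N] (w : ℕ → ZMod N → ℝ) (p : ℕ → ℕ)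
    (s : ZMod N → ℂ) (j : ℕ) : ZMod N → ℂ :=
  (fluctuation (w j))^[p j] (remainder w p s (j - 1))

noncomputable def chi {N : ℕ} [NeZero N] (k j : ZMod N) : ℂ :=
  Complex.exp (-(2 * (Real.pi : ℂ) * Complex.I * ((j.val : ℂ) * (k.val : ℂ)) / (N : ℂ)))

lemma chi_add {N : ℕ} [NeZero N] (k a b : ZMod N) :
    chi k (a + b) = chi k a * chi k b := by
  unfold chi
  rw [← Complex.exp_add]
  have hN : (N : ℂ) ≠ 0 := Nat.cast_ne_zero.mpr (NeZero.ne N)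
  set q : ℕ := (a.val + b.val) / N with hq
  have hval : a.val + b.val = (a + b).val + N * q := by
    rw [ZMod.val_add, hq]; exact (Nat.mod_add_div _ _).symm
  have hc : (a.val : ℂ) + (b.val : ℂ) = ((a + b).val : ℂ) + (N : ℂ) * (q : ℂ) := by
    exact_mod_cast congrArg (Nat.cast : ℕ → ℂ) hval
  have h1 : -(2 * (Real.pi : ℂ) * Complex.I * ((a.val : ℂ) * (k.val : ℂ)) / (N : ℂ)) +
      -(2 * (Real.pi : ℂ) * Complex.I * ((b.val : ℂ) * (k.val : ℂ)) / (N : ℂ)) =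
      -(2 * (Real.pi : ℂ) * Complex.I * (((a + b).val : ℂ) * (k.val : ℂ)) / (N : ℂ)) +
      ((-(q * k.val) : ℤ) : ℂ) * (2 * (Real.pi : ℂ) * Complex.I) := by
    simp only [Int.cast_neg, Int.cast_mul, Int.cast_natCast]
    have h2 : ((q : ℂ) * (N : ℂ)) / (N : ℂ) = (q : ℂ) := mul_div_cancel_right₀ _ hN
    linear_combination (-(2 * (Real.pi : ℂ) * Complex.I * (k.val : ℂ) / (N:ℂ))) * hc - (2 * (Real.pi : ℂ) * Complex.I * (k.val : ℂ)) * h2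
  rw [h1, Complex.exp_add, Complex.exp_int_mul_two_pi_mul_I, mul_one]

lemma dft_eq_chi {N : ℕ} [NeZero N] (s : ZMod N → ℂ) (k : ZMod N) :
    discreteFourier N s k = ∑ j : ZMod N, s j * chi k j := rfl

lemma dft_sub {N : ℕ} [NeZero N] (s t : ZMod N → ℂ) (k : ZMod N) :
    discreteFourier N (s - t) k = discreteFourier N s k - discreteFourier N t k := by
  simp [discreteFourier, sub_mul, Finset.sum_sub_distrib]

lemma dft_fluct {N : ℕ} [NeZero N] (w : ZMod N → ℝ) (s : ZMod N → ℂ) (k : ZMod N) :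
    discreteFourier N (fluctuation w s) k =
      (1 - discreteFourier N (fun g => (w g : ℂ)) k) * discreteFourier N s k := by
  simp only [dft_eq_chi, fluctuation, sub_mul, one_mul, Finset.sum_sub_distrib]
  congr 1
  calc ∑ g : ZMod N, (∑ h : ZMod N, ((w (g - h) : ℂ)) * s h) * chi k g
      = ∑ g : ZMod N, ∑ h : ZMod N, ((w (g - h) : ℂ)) * s h * chi k g := by
        simp [Finset.sum_mul]
    _ = ∑ h : ZMod N, ∑ g : ZMod N, ((w (g - h) : ℂ)) * s h * chi k g := Finset.sum_comm
    _ = ∑ h : ZMod N, ∑ d : ZMod N, ((w d : ℂ)) * s h * chi k (d + h) := by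
        refine Finset.sum_congr rfl fun h _ => ?_
        rw [← Equiv.sum_comp (Equiv.addRight h)
          (fun g => ((w (g - h) : ℂ)) * s h * chi k g)]
        simp
    _ = (∑ d : ZMod N, ((w d : ℂ)) * chi k d) * ∑ h : ZMod N, s h * chi k h := by
        rw [Finset.sum_mul_sum, Finset.sum_comm]
        refine Finset.sum_congr rfl fun h _ => Finset.sum_congr rfl fun d _ => ?_
        rw [chi_add]; ring

lemma dft_fluct_iter {N : ℕ} [NeZero N] (w : ZMod N → ℝ) (s : ZMod N → ℂ) (k : ZMod N)
    (m : ℕ) :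
    discreteFourier N ((fluctuation w)^[m] s) k =
      (1 - discreteFourier N (fun g => (w g : ℂ)) k) ^ m * discreteFourier N s k := by
  induction m with
  | zero => simp
  | succ m ih =>
    rw [Function.iterate_succ_apply', dft_fluct, ih, pow_succ]; ring

lemma dft_remainder {N : ℕ} [NeZero N] (w : ℕ → ZMod N → ℝ) (p : ℕ → ℕ)
    (s : ZMod N → ℂ) (k : ZMod N) (m : ℕ) :
    discreteFourier N (remainder w p s m) k =
      (∏ j ∈ Finset.Ico 1 (m + 1),
        (1 - (1 - discreteFourier N (fun g => (w j g : ℂ)) k) ^ (p j))) *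
      discreteFourier N s k := by
  induction m with
  | zero => simp [remainder]
  | succ m ih =>
    rw [remainder, dft_sub, dft_fluct_iter, ih,
      Finset.prod_Ico_succ_top (Nat.succ_le_succ (Nat.zero_le m))]
    ring

/-- Fourier-side formula for the `n`-th intrinsic mode function:
`ℱ(IMF_n)(k) = (1 − ℱwₙ(k))^{pₙ} · ∏_{j=1}^{n−1} (1 − (1 − ℱw_j(k))^{p_j}) · ℱs(k)`. -/
theorem dft_imf (N : ℕ) [NeZero N] (hN : 1 ≤ N) (n : ℕ) (hn : 1 ≤ n)
    (w : ℕ → ZMod N → ℝ) (p : ℕ → ℕ)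
    (hfilter : ∀ j, 1 ≤ j → j ≤ n →
      (∀ g, 0 ≤ w j g) ∧ (∀ g, w j (-g) = w j g) ∧ (∑ g : ZMod N, w j g = 1))
    (s : ZMod N → ℂ) (k : ZMod N) :
    discreteFourier N (imf w p s n) k =
      (1 - discreteFourier N (fun g => (w n g : ℂ)) k) ^ (p n) *
        (∏ j ∈ Finset.Ico 1 n,
          (1 - (1 - discreteFourier N (fun g => (w j g : ℂ)) k) ^ (p j))) *
        discreteFourier N s k := by
  rw [imf, dft_fluct_iter, dft_remainder, Nat.sub_add_cancel hn, mul_assoc]
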